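/- Let d ≥ 2 be an integer, let β₀ > (d+1)/2 and β ≥ β₀ be real, let A > 0 and let t < 0. Then (c'_{d,β} π^{(d−1)/2} / ((2β)^{d/2} Γ((d+1)/2))) · ∫_{−∞}^{t} (√(t−s) + A)^{d−1} (1 − s/(2β))^{−β} ds < (2 (2β₀)^{β₀} / (√π (2β₀ − d − 1)^{(d+1)/2})) · (A+1)^{d−1} · (2β₀ − t)^{−β₀ + (d+1)/2}. -/

import Mathlib

open MeasureTheory Set

/-- The constant `c'_{d,β} = Γ(β)/(π^{d/2} Γ(β-d/2))`. -/
noncomputable def cPrime (d : ℕ) (β : ℝ) : ℝ :=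
  Real.Gamma β / (Real.pi ^ ((d : ℝ) / 2) * Real.Gamma (β - (d : ℝ) / 2))

/-- midpoint log-convexity: `Γ(β) ≤ √β·Γ(β-1/2)` for `β ≥ 1`. -/
lemma gamma_half_step {β : ℝ} (hβ : 1 ≤ β) :
    Real.Gamma β ≤ β ^ ((1:ℝ)/2) * Real.Gamma (β - 1/2) := by
  have h1 : (0:ℝ) < β - 1/2 := by linarith
  have h2 : (0:ℝ) < β + 1/2 := by linarith
  have hmid := Real.convexOn_log_Gamma.2 (mem_Ioi.2 h1) (mem_Ioi.2 h2)
      (by norm_num : (0:ℝ) ≤ 1/2) (by norm_num : (0:ℝ) ≤ 1/2) (by norm_num)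
  simp only [smul_eq_mul, Function.comp_apply] at hmid
  have hx : (1/2 : ℝ) * (β - 1/2) + (1/2 : ℝ) * (β + 1/2) = β := by ring
  rw [hx] at hmid
  have hG1 : 0 < Real.Gamma (β - 1/2) := Real.Gamma_pos_of_pos h1
  have hG2 : 0 < Real.Gamma (β + 1/2) := Real.Gamma_pos_of_pos h2
  have hGβ : 0 < Real.Gamma β := Real.Gamma_pos_of_pos (by linarith)
  have hsq : Real.Gamma β ^ 2 ≤ Real.Gamma (β - 1/2) * Real.Gamma (β + 1/2) := by
    have : Real.log (Real.Gamma β ^ 2) ≤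
        Real.log (Real.Gamma (β - 1/2) * Real.Gamma (β + 1/2)) := by
      rw [Real.log_pow, Real.log_mul hG1.ne' hG2.ne']
      push_cast; linarith
    exact (Real.log_le_log_iff (by positivity) (by positivity)).1 this
  have hrec : Real.Gamma (β + 1/2) = (β - 1/2) * Real.Gamma (β - 1/2) := by
    have := Real.Gamma_add_one h1.ne'
    rw [show β - 1/2 + 1 = β + 1/2 by ring] at this
    exact this
  have hsq2 : Real.Gamma β ^ 2 ≤ β * Real.Gamma (β - 1/2) ^ 2 := by
    rw [hrec] at hsq; nlinarith [sq_nonneg (Real.Gamma (β - 1/2))]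
  have h4 : Real.Gamma β = Real.sqrt (Real.Gamma β ^ 2) := (Real.sqrt_sq hGβ.le).symm
  rw [h4, ← Real.sqrt_eq_rpow]
  calc Real.sqrt (Real.Gamma β ^ 2) ≤ Real.sqrt (β * Real.Gamma (β - 1/2) ^ 2) :=
        Real.sqrt_le_sqrt hsq2
    _ = Real.sqrt β * Real.Gamma (β - 1/2) := by
        rw [Real.sqrt_mul (by linarith), Real.sqrt_sq hG1.le]

/-- `Γ(β) ≤ β^{d/2} Γ(β - d/2)` for `β ≥ (d+1)/2`. -/
lemma gamma_ratio : ∀ (d : ℕ) (β : ℝ), ((d : ℝ) + 1) / 2 ≤ β →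
    Real.Gamma β ≤ β ^ ((d:ℝ)/2) * Real.Gamma (β - (d:ℝ)/2) := by
  intro d
  induction d using Nat.strong_induction_on with
  | _ d ih =>
    match d with
    | 0 => intro β hβ; simp
    | 1 =>
      intro β hβ
      have : (1:ℝ) ≤ β := by push_cast at hβ; linarith
      simpa using gamma_half_step this
    | (n+2) =>
      intro β hβ
      push_cast at hβ ⊢
      have hβ1 : ((n:ℝ) + 1) / 2 ≤ β - 1 := by linarith [Nat.cast_nonneg (α := ℝ) n]
      have hn0 : (0:ℝ) ≤ n := Nat.cast_nonneg n
      have hβ1pos : (0:ℝ) < β - 1 := by linarith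
      have hβpos : (0:ℝ) < β := by linarith
      have hrec : Real.Gamma β = (β - 1) * Real.Gamma (β - 1) := by
        have := Real.Gamma_add_one hβ1pos.ne'
        rw [show β - 1 + 1 = β by ring] at this
        exact this
      have hih := ih n (by omega) (β - 1) hβ1
      have hGpos : 0 < Real.Gamma (β - 1 - (n:ℝ)/2) := Real.Gamma_pos_of_pos (by linarith)
      have hb1 : (β - 1) ^ ((n:ℝ)/2) ≤ β ^ ((n:ℝ)/2) :=
        Real.rpow_le_rpow hβ1pos.le (by linarith) (by positivity)
      have hexp : β ^ (((n:ℝ)+2)/2) = β ^ ((n:ℝ)/2) * β := by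
        rw [show ((n:ℝ)+2)/2 = (n:ℝ)/2 + 1 by ring, Real.rpow_add hβpos, Real.rpow_one]
      rw [hexp, hrec]
      have harg : β - 1 - (n:ℝ)/2 = β - ((n:ℝ)+2)/2 := by ring
      calc (β - 1) * Real.Gamma (β - 1)
          ≤ (β - 1) * ((β-1) ^ ((n:ℝ)/2) * Real.Gamma (β - 1 - (n:ℝ)/2)) := by
            exact mul_le_mul_of_nonneg_left hih hβ1pos.le
        _ ≤ β * (β ^ ((n:ℝ)/2) * Real.Gamma (β - 1 - (n:ℝ)/2)) := by
            apply mul_le_mul (by linarith) (mul_le_mul_of_nonneg_right hb1 hGpos.le)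
              (by positivity) hβpos.le
        _ = β ^ ((n:ℝ)/2) * β * Real.Gamma (β - ((n:ℝ)+2)/2) := by rw [harg]; ring

/-- `Γ((d+1)/2) ≥ √π/2` for `d ≥ 2`. -/
lemma gamma_lb : ∀ d : ℕ, 2 ≤ d → Real.sqrt Real.pi / 2 ≤ Real.Gamma (((d:ℝ)+1)/2) := by
  intro d
  induction d using Nat.strong_induction_on with
  | _ d ih =>
    match d with
    | 0 => omega
    | 1 => omega
    | 2 =>
      intro _
      have : (((2:ℕ):ℝ)+1)/2 = 1/2 + 1 := by norm_num
      rw [this, Real.Gamma_add_one (by norm_num), Real.Gamma_one_half_eq]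
      linarith
    | 3 =>
      intro _
      have : (((3:ℕ):ℝ)+1)/2 = 2 := by norm_num
      rw [this, show (2:ℝ) = 1 + 1 by norm_num, Real.Gamma_add_one one_ne_zero,
        Real.Gamma_one, one_mul]
      have h4 : Real.sqrt Real.pi ≤ 2 := by
        have := Real.sqrt_le_sqrt Real.pi_le_four
        rwa [show (4:ℝ) = 2^2 by norm_num, Real.sqrt_sq (by norm_num)] at this
      linarith
    | (n+4) =>
      intro _
      have hih := ih (n+2) (by omega) (by omega)
      have hn0 : (0:ℝ) ≤ n := Nat.cast_nonneg n
      have hx : (0:ℝ) < ((n:ℝ)+3)/2 := by linarith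
      have hrec : Real.Gamma (((n:ℝ)+4+1)/2) = (((n:ℝ)+3)/2) * Real.Gamma (((n:ℝ)+3)/2) := by
        have := Real.Gamma_add_one hx.ne'
        rw [show ((n:ℝ)+3)/2 + 1 = ((n:ℝ)+4+1)/2 by ring] at this
        exact this
      have harg2 : ((((n:ℕ)+2:ℕ)):ℝ) + 1 = (n:ℝ) + 3 := by push_cast; ring
      rw [harg2] at hih
      have hG : 0 < Real.Gamma (((n:ℝ)+3)/2) := Real.Gamma_pos_of_pos hx
      rw [show ((((n+4:ℕ)):ℝ)+1)/2 = ((n:ℝ)+4+1)/2 by push_cast; ring, hrec]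
      nlinarith

section subst
variable {c M : ℝ}

lemma image_phi (hM : 0 < M) :
    (fun w => c - M * Real.exp w) '' (Ioi 0) = Iio (c - M) := by
  ext x
  simp only [mem_image, mem_Ioi, mem_Iio]
  constructor
  · rintro ⟨w, hw, rfl⟩
    have h1 : 1 < Real.exp w := Real.one_lt_exp_iff.mpr hw
    nlinarith
  · intro hx
    have hpos : 0 < (c - x) / M := div_pos (by linarith) hM
    refine ⟨Real.log ((c - x) / M), ?_, ?_⟩
    · apply Real.log_pos
      rw [lt_div_iff₀ hM]; linarith
    · rw [Real.exp_log hpos]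
      field_simp
      ring

lemma deriv_phi (hM : 0 < M) : ∀ w ∈ Ioi (0:ℝ),
    HasDerivWithinAt (fun w => c - M * Real.exp w) (-(M * Real.exp w)) (Ioi 0) w :=
  fun w _ => (((Real.hasDerivAt_exp w).const_mul M).const_sub c).hasDerivWithinAt

lemma inj_phi (hM : 0 < M) : InjOn (fun w => c - M * Real.exp w) (Ioi 0) := by
  intro x _ y _ h
  simp only at h
  have : Real.exp x = Real.exp y := by
    have h2 : M * Real.exp x = M * Real.exp y := by linarith
    exact mul_left_cancel₀ hM.ne' h2
  exact Real.exp_injective this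

lemma integral_Iio_subst (hM : 0 < M) (g : ℝ → ℝ) :
    ∫ x in Iio (c - M), g x =
      ∫ w in Ioi (0:ℝ), (M * Real.exp w) * g (c - M * Real.exp w) := by
  rw [← image_phi hM,
    integral_image_eq_integral_abs_deriv_smul measurableSet_Ioi (deriv_phi hM) (inj_phi hM) g]
  refine setIntegral_congr_fun measurableSet_Ioi (fun w _ => ?_)
  rw [abs_neg, abs_of_pos (by positivity), smul_eq_mul]

lemma integrableOn_Iio_subst (hM : 0 < M) (g : ℝ → ℝ) :
    IntegrableOn g (Iio (c - M)) ↔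
      IntegrableOn (fun w => (M * Real.exp w) * g (c - M * Real.exp w)) (Ioi (0:ℝ)) := by
  rw [← image_phi hM,
    integrableOn_image_iff_integrableOn_abs_deriv_smul measurableSet_Ioi (deriv_phi hM)
      (inj_phi hM) g]
  exact integrableOn_congr_fun
    (fun w _ => by rw [abs_neg, abs_of_pos (by positivity), smul_eq_mul]) measurableSet_Ioi

end subst

/-- abstract final arithmetic -/
lemma core_arith {q w G p x X s2 : ℝ} (hq : 0 < q) (hw : 0 < w) (hG : 0 < G) (hp : 0 < p)
    (hx : 0 < x) (hs2 : s2 * s2 = 2) (hs2pos : 0 < s2)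
    (hXlt : X < (q * p)⁻¹) (hnum : 1 ≤ q * (s2 - 1) * G) :
    s2 / q / (w * G) * (x * (p⁻¹ * G) + x * X) < 2 / (w * (q * p)) * x := by
  have h1 : p * X < q⁻¹ := by
    calc p * X < p * (q * p)⁻¹ := by exact mul_lt_mul_of_pos_left hXlt hp
      _ = q⁻¹ := by field_simp
  have h3 : q⁻¹ ≤ (s2 - 1) * G := by
    rw [inv_eq_one_div, div_le_iff₀ hq]
    nlinarith
  have key : s2 * (G + p * X) < 2 * G := by
    have h4 : s2 * q⁻¹ ≤ (2 - s2) * G := by nlinarith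
    nlinarith
  have e1 : s2 / q / (w * G) * (x * (p⁻¹ * G) + x * X) = s2 * (G + p * X) * x / (q * w * G * p) := by
    field_simp
  have e2 : 2 / (w * (q * p)) * x = 2 * G * x / (q * w * G * p) := by
    field_simp
  rw [e1, e2]
  apply div_lt_div_of_pos_right ?_ (by positivity)
  nlinarith

set_option maxHeartbeats 1000000 in
/-- For `d ≥ 2`, `β₀ > (d+1)/2`, `β ≥ β₀`, `A > 0`, `t < 0`:
`(c'_{d,β} π^{(d-1)/2}/((2β)^{d/2} Γ((d+1)/2))) ∫_{-∞}^{t}(√(t-s)+A)^{d-1}(1-s/(2β))^{-β} ds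
 < (2(2β₀)^{β₀}/(√π (2β₀-d-1)^{(d+1)/2})) (A+1)^{d-1} (2β₀-t)^{-β₀+(d+1)/2}`. -/
theorem stmt_12 (d : ℕ) (hd : 2 ≤ d) (β₀ β A t : ℝ)
    (hβ₀ : ((d : ℝ) + 1) / 2 < β₀) (hβ : β₀ ≤ β) (hA : 0 < A) (ht : t < 0) :
    cPrime d β * Real.pi ^ (((d : ℝ) - 1) / 2) /
        ((2 * β) ^ ((d : ℝ) / 2) * Real.Gamma (((d : ℝ) + 1) / 2)) *
        ∫ s in Set.Iic t,
          (Real.sqrt (t - s) + A) ^ (d - 1) * (1 - s / (2 * β)) ^ (-β)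
      < 2 * (2 * β₀) ^ β₀ /
          (Real.sqrt Real.pi * (2 * β₀ - (d : ℝ) - 1) ^ (((d : ℝ) + 1) / 2)) *
          (A + 1) ^ (d - 1) * (2 * β₀ - t) ^ (-β₀ + ((d : ℝ) + 1) / 2) := by
  have hd2 : (2:ℝ) ≤ (d:ℝ) := by exact_mod_cast hd
  set a : ℝ := ((d:ℝ)+1)/2 with ha_def
  have ha32 : (3:ℝ)/2 ≤ a := by rw [ha_def]; linarith
  have ha0 : (0:ℝ) < a := by linarith
  have ha1 : (1:ℝ)/2 ≤ a - 1 := by linarith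
  have hβ₀pos : 0 < β₀ := lt_trans ha0 hβ₀
  have hβpos : 0 < β := lt_of_lt_of_le hβ₀pos hβ
  set r : ℝ := β₀ - a with hr_def
  have hr : 0 < r := by rw [hr_def]; linarith [hβ₀]
  have hβ₀ra : β₀ = r + a := by rw [hr_def]; ring
  set M : ℝ := 2*β₀ - t with hM_def
  have hM2β : 2*β₀ < M := by rw [hM_def]; linarith
  have hM0 : 0 < M := by linarith
  have hM1 : 1 < M := by linarith
  have h2r : (0:ℝ) < 2*r := by linarith
  have h2rM : 2*r < M := by nlinarith
  have hΓa : Real.sqrt Real.pi / 2 ≤ Real.Gamma a := gamma_lb d hd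
  have hπ : (0:ℝ) < Real.pi := Real.pi_pos
  have hsπ0 : (0:ℝ) < Real.sqrt Real.pi := Real.sqrt_pos.2 hπ
  have hΓapos : 0 < Real.Gamma a := lt_of_lt_of_le (by positivity) hΓa
  have hd1 : 1 ≤ d := by omega
  set G : ℝ → ℝ := fun s => (max (t-s) 1) ^ (a-1) * (2*β₀-s) ^ (-β₀) with hG_def
  set ψ : ℝ → ℝ := fun s => (Real.log ((2*β₀-s)/M)) ^ (a-1) * (2*β₀-s) ^ (-(r+1)) with hψ_def
  set dm : ℝ → ℝ := fun s => (2*β₀-s) ^ (-(r+1)) with hdm_def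
  have hct : t = 2*β₀ - M := by rw [hM_def]; ring
  -- pullback computations
  have key : ∀ w : ℝ, (M * Real.exp w) * (M * Real.exp w)^(-(r+1))
      = M^(-r) * Real.exp (-(r*w)) := by
    intro w
    have hx : (0:ℝ) < M * Real.exp w := by positivity
    rw [mul_comm, ← Real.rpow_add_one hx.ne', show -(r+1)+1 = -r by ring,
      Real.mul_rpow hM0.le (Real.exp_pos w).le]
    congr 1
    rw [Real.rpow_def_of_pos (Real.exp_pos w), Real.log_exp]
    congr 1; ring
  have hcomp_dm : ∀ w ∈ Set.Ioi (0:ℝ), (M * Real.exp w) * dm (2*β₀ - M * Real.exp w)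
      = M^(-r) * Real.exp (-(r*w)) := by
    intro w _
    rw [hdm_def]
    simp only
    rw [show 2*β₀ - (2*β₀ - M * Real.exp w) = M * Real.exp w by ring]
    exact key w
  have hcomp_ψ : ∀ w ∈ Set.Ioi (0:ℝ), (M * Real.exp w) * ψ (2*β₀ - M * Real.exp w)
      = M^(-r) * (w ^ (a-1) * Real.exp (-(r*w))) := by
    intro w _
    rw [hψ_def]
    simp only
    rw [show 2*β₀ - (2*β₀ - M * Real.exp w) = M * Real.exp w by ring]
    have hlg : Real.log (M * Real.exp w / M) = w := by
      rw [mul_comm, mul_div_assoc, div_self hM0.ne', mul_one, Real.log_exp]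
    rw [hlg, show (M * Real.exp w) * (w ^ (a-1) * (M * Real.exp w)^(-(r+1)))
      = w ^ (a-1) * ((M * Real.exp w) * (M * Real.exp w)^(-(r+1))) by ring, key w]
    ring
  -- integrabilities
  have hbase2 : IntegrableOn (fun w : ℝ => M^(-r) * (w^(a-1) * Real.exp (-(r*w))))
      (Set.Ioi (0:ℝ)) := by
    have hbase : IntegrableOn (fun x : ℝ => x ^ (a-1) * Real.exp (-r * x ^ (1:ℝ)))
        (Set.Ioi (0:ℝ)) := integrableOn_rpow_mul_exp_neg_mul_rpow (by linarith) one_pos hr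
    refine IntegrableOn.congr_fun (hbase.const_mul (M^(-r))) (fun x _ => ?_) measurableSet_Ioi
    rw [Real.rpow_one, neg_mul]
  have hψint : IntegrableOn ψ (Set.Iio t) := by
    rw [hct, integrableOn_Iio_subst hM0 ψ]
    exact IntegrableOn.congr_fun hbase2 (fun w hw => (hcomp_ψ w hw).symm) measurableSet_Ioi
  have hdmint : IntegrableOn dm (Set.Iio t) := by
    rw [hct, integrableOn_Iio_subst hM0 dm]
    refine IntegrableOn.congr_fun ((exp_neg_integrableOn_Ioi 0 hr).const_mul (M^(-r)))
      (fun w hw => ?_) measurableSet_Ioi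
    rw [neg_mul]
    exact (hcomp_dm w hw).symm
  have hdmint' : IntegrableOn dm (Set.Iic t) := by
    rwa [IntegrableOn, ← Measure.restrict_congr_set Iio_ae_eq_Iic]
  have hGmeas : Measurable G := by
    rw [hG_def]; fun_prop
  have hGnn : ∀ s ∈ Set.Iic t, 0 ≤ G s := by
    intro s hs
    rw [hG_def]
    simp only
    have h1 : (0:ℝ) ≤ max (t-s) 1 := le_trans zero_le_one (le_max_right _ _)
    exact mul_nonneg (Real.rpow_nonneg h1 _)
      (Real.rpow_nonneg (by simp only [Set.mem_Iic] at hs; linarith) _)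
  have hGbound : ∀ s ∈ Set.Iic t, G s ≤ dm s := by
    intro s hs
    simp only [Set.mem_Iic] at hs
    rw [hG_def, hdm_def]
    simp only
    have h1 : (0:ℝ) < 2*β₀ - s := by linarith
    have h2 : max (t-s) 1 ≤ 2*β₀-s := max_le (by linarith) (by linarith)
    calc (max (t-s) 1)^(a-1) * (2*β₀-s)^(-β₀)
        ≤ (2*β₀-s)^(a-1) * (2*β₀-s)^(-β₀) := by
          apply mul_le_mul_of_nonneg_right
            (Real.rpow_le_rpow (le_trans zero_le_one (le_max_right _ _)) h2 (by linarith))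
            (Real.rpow_nonneg h1.le _)
      _ = (2*β₀-s)^(-(r+1)) := by
          rw [← Real.rpow_add h1]
          congr 1
          rw [hβ₀ra]; ring
  have hGint : IntegrableOn G (Set.Iic t) := by
    refine hdmint'.mono' hGmeas.aestronglyMeasurable ?_
    rw [ae_restrict_iff' measurableSet_Iic]
    filter_upwards with s hs
    rw [Real.norm_eq_abs, abs_of_nonneg (hGnn s hs)]
    exact hGbound s hs
  -- pointwise bound on the original integrand
  have hfnn : ∀ s ∈ Set.Iic t,
      (0:ℝ) ≤ (Real.sqrt (t - s) + A) ^ (d - 1) * (1 - s / (2 * β)) ^ (-β) := by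
    intro s hs
    simp only [Set.mem_Iic] at hs
    have h1 : (0:ℝ) ≤ 1 - s/(2*β) := by
      have h2 : s/(2*β) ≤ 0 := div_nonpos_of_nonpos_of_nonneg (by linarith) (by linarith)
      linarith
    exact mul_nonneg (pow_nonneg (by positivity) _) (Real.rpow_nonneg h1 _)
  have hfg : ∀ s ∈ Set.Iic t,
      (Real.sqrt (t - s) + A) ^ (d - 1) * (1 - s / (2 * β)) ^ (-β)
        ≤ ((A+1)^(d-1) * (2*β₀)^β₀) * G s := by
    intro s hs
    simp only [Set.mem_Iic] at hs
    have hsq : Real.sqrt (t-s) + A ≤ (A+1) * Real.sqrt (max (t-s) 1) := by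
      rcases le_total (t-s) 1 with h | h
      · rw [max_eq_right h]
        have h2 : Real.sqrt (t-s) ≤ 1 := by
          have := Real.sqrt_le_sqrt h
          rwa [Real.sqrt_one] at this
        rw [Real.sqrt_one]; linarith
      · rw [max_eq_left h]
        have h1 : 1 ≤ Real.sqrt (t-s) := by
          have := Real.sqrt_le_sqrt h
          rwa [Real.sqrt_one] at this
        nlinarith [Real.sqrt_nonneg (t-s)]
    have hApow : (Real.sqrt (t-s) + A) ^ (d-1) ≤ (A+1)^(d-1) * (max (t-s) 1) ^ (a-1) := by
      have h0 : 0 ≤ Real.sqrt (t-s) + A := by positivity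
      have h2 := pow_le_pow_left₀ h0 hsq (d-1)
      rw [mul_pow] at h2
      refine h2.trans (le_of_eq ?_)
      congr 1
      have hm : (0:ℝ) ≤ max (t-s) 1 := le_trans zero_le_one (le_max_right _ _)
      rw [Real.sqrt_eq_rpow, ← Real.rpow_natCast ((max (t-s) 1) ^ ((1:ℝ)/2)) (d-1),
        ← Real.rpow_mul hm]
      congr 1
      rw [Nat.cast_sub hd1]
      push_cast
      rw [ha_def]; ring
    have hB : (1 - s / (2*β)) ^ (-β) ≤ (2*β₀)^β₀ * (2*β₀ - s) ^ (-β₀) := by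
      have hx : (0:ℝ) ≤ -s := by linarith
      have hb1 : (0:ℝ) < 1 + (-s)/(2*β₀) := by positivity
      have hb2 : (0:ℝ) < 1 + (-s)/(2*β) := by positivity
      have hmono : (1 + (-s)/(2*β₀)) ^ β₀ ≤ (1 + (-s)/(2*β)) ^ β := by
        have hp : (1:ℝ) ≤ β/β₀ := (one_le_div hβ₀pos).2 hβ
        have hbern := one_add_mul_self_le_rpow_one_add
          (show (-1:ℝ) ≤ (-s)/(2*β) by
            have : (0:ℝ) ≤ (-s)/(2*β) := div_nonneg (by linarith) (by linarith)
            linarith) hp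
        have harith : (β/β₀)*((-s)/(2*β)) = (-s)/(2*β₀) := by
          field_simp
        rw [harith] at hbern
        have h5 := Real.rpow_le_rpow hb1.le hbern hβ₀pos.le
        rwa [← Real.rpow_mul hb2.le, div_mul_cancel₀ β hβ₀pos.ne'] at h5
      have hinv : (1 - s/(2*β)) ^ (-β) ≤ (1 - s/(2*β₀)) ^ (-β₀) := by
        rw [show 1 - s/(2*β) = 1 + (-s)/(2*β) by ring,
          show 1 - s/(2*β₀) = 1 + (-s)/(2*β₀) by ring,
          Real.rpow_neg hb2.le, Real.rpow_neg hb1.le]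
        exact inv_anti₀ (Real.rpow_pos_of_pos hb1 _) hmono
      refine hinv.trans (le_of_eq ?_)
      rw [show 1 - s/(2*β₀) = (2*β₀ - s)/(2*β₀) by field_simp,
        Real.div_rpow (by linarith) (by linarith),
        Real.rpow_neg (show (0:ℝ) ≤ 2*β₀ by linarith)]
      field_simp
    have hfnn2 : (0:ℝ) ≤ (1 - s/(2*β)) ^ (-β) := Real.rpow_nonneg (by
      have : s/(2*β) ≤ 0 := by
        apply div_nonpos_of_nonpos_of_nonneg (by linarith) (by linarith)
      linarith) _
    calc (Real.sqrt (t-s) + A) ^ (d-1) * (1 - s/(2*β)) ^ (-β)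
        ≤ ((A+1)^(d-1) * (max (t-s) 1)^(a-1)) * ((2*β₀)^β₀ * (2*β₀-s)^(-β₀)) := by
          apply mul_le_mul hApow hB hfnn2 (by positivity)
      _ = ((A+1)^(d-1) * (2*β₀)^β₀) * G s := by
          rw [hG_def]; simp only; ring
  -- integral of f bounded by integral of c * G
  have hfae : 0 ≤ᵐ[volume.restrict (Set.Iic t)]
      fun s => (Real.sqrt (t - s) + A) ^ (d - 1) * (1 - s / (2 * β)) ^ (-β) := by
    rw [Filter.EventuallyLE, ae_restrict_iff' measurableSet_Iic]
    filter_upwards with s hs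
    exact hfnn s hs
  have hint1 : (∫ s in Set.Iic t, (Real.sqrt (t - s) + A) ^ (d - 1) * (1 - s / (2 * β)) ^ (-β))
      ≤ ((A+1)^(d-1) * (2*β₀)^β₀) * ∫ s in Set.Iic t, G s := by
    rw [← integral_const_mul]
    refine integral_mono_of_nonneg hfae (hGint.const_mul _) ?_
    rw [Filter.EventuallyLE, ae_restrict_iff' measurableSet_Iic]
    filter_upwards with s hs
    exact hfg s hs
  -- split the integral of G
  have hsplit : (∫ s in Set.Iic t, G s)
      = (∫ s in Set.Iic (t-1), G s) + ∫ s in Set.Ioc (t-1) t, G s := by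
    rw [← setIntegral_union (Set.Iic_disjoint_Ioc le_rfl) measurableSet_Ioc
      (hGint.mono_set (Set.Iic_subset_Iic.2 (by linarith)))
      (hGint.mono_set Set.Ioc_subset_Iic_self),
      Set.Iic_union_Ioc_eq_Iic (by linarith)]
  have hpiece2 : (∫ s in Set.Ioc (t-1) t, G s) ≤ M^(-β₀) := by
    have hb : (∫ s in Set.Ioc (t-1) t, G s) ≤ ∫ _ in Set.Ioc (t-1) t, M^(-β₀) := by
      refine setIntegral_mono_on (hGint.mono_set Set.Ioc_subset_Iic_self)
        (integrableOn_const (by rw [Real.volume_Ioc]; exact ENNReal.ofReal_ne_top))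
        measurableSet_Ioc ?_
      intro s hs
      obtain ⟨hs1, hs2⟩ := hs
      rw [hG_def]
      simp only
      rw [max_eq_right (by linarith), Real.one_rpow, one_mul]
      have hxy : M ≤ 2*β₀ - s := by rw [hM_def]; linarith
      exact Real.rpow_le_rpow_of_nonpos hM0 hxy (by linarith)
    rw [setIntegral_const, Real.volume_real_Ioc, show t - (t-1) = 1 by ring] at hb
    simpa using hb
  have hψval : (∫ s in Set.Iio t, ψ s) = M^(-r) * ((1/r)^a * Real.Gamma a) := by
    rw [hct, integral_Iio_subst hM0 ψ,
      show (∫ w in Set.Ioi (0:ℝ), (M * Real.exp w) * ψ (2*β₀ - M * Real.exp w))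
        = ∫ w in Set.Ioi (0:ℝ), M^(-r) * (w^(a-1) * Real.exp (-(r*w))) from
        setIntegral_congr_fun measurableSet_Ioi (fun w hw => hcomp_ψ w hw),
      integral_const_mul]
    congr 1
    exact Real.integral_rpow_mul_exp_neg_mul_Ioi ha0 hr
  have hψnn : 0 ≤ᵐ[volume.restrict (Set.Iio t)] ψ := by
    rw [Filter.EventuallyLE, ae_restrict_iff' measurableSet_Iio]
    filter_upwards with s hs
    simp only [Set.mem_Iio] at hs
    rw [hψ_def]
    simp only
    refine mul_nonneg (Real.rpow_nonneg ?_ _) (Real.rpow_nonneg (by linarith) _)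
    refine Real.log_nonneg ?_
    rw [le_div_iff₀ hM0, one_mul, hM_def]
    linarith
  have hpiece1 : (∫ s in Set.Iic (t-1), G s) ≤ M^(-r) * ((1/r)^a * Real.Gamma a) := by
    have hsub : Set.Iic (t-1) ⊆ Set.Iio t := by
      intro x hx
      simp only [Set.mem_Iic] at hx
      simp only [Set.mem_Iio]
      linarith
    have hstep1 : (∫ s in Set.Iic (t-1), G s) ≤ ∫ s in Set.Iic (t-1), ψ s := by
      refine setIntegral_mono_on (hGint.mono_set (Set.Iic_subset_Iic.2 (by linarith)))
        (hψint.mono_set hsub) measurableSet_Iic ?_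
      intro s hs
      simp only [Set.mem_Iic] at hs
      have hu1 : (1:ℝ) ≤ t - s := by linarith
      have hu0 : (0:ℝ) < t - s := by linarith
      have hMu : 2*β₀ - s = M + (t - s) := by rw [hM_def]; ring
      have hMu0 : (0:ℝ) < 2*β₀ - s := by rw [hMu]; linarith
      rw [hG_def, hψ_def]
      simp only
      rw [max_eq_left hu1]
      rw [show (-β₀ : ℝ) = -(a-1) + -(r+1) by rw [hβ₀ra]; ring, Real.rpow_add hMu0,
        ← mul_assoc]
      refine mul_le_mul_of_nonneg_right ?_ (Real.rpow_nonneg hMu0.le _)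
      rw [Real.rpow_neg hMu0.le, ← div_eq_mul_inv, ← Real.div_rpow hu0.le hMu0.le]
      refine Real.rpow_le_rpow (by positivity) ?_ (by linarith)
      have hlog := Real.log_le_sub_one_of_pos (show (0:ℝ) < M/(2*β₀-s) by positivity)
      rw [show M/(2*β₀-s) = ((2*β₀-s)/M)⁻¹ by rw [inv_div], Real.log_inv] at hlog
      have harith2 : M/(2*β₀-s) - 1 = -((t-s)/(2*β₀-s)) := by
        field_simp
        rw [hMu]; ring
      rw [show ((2*β₀-s)/M)⁻¹ = M/(2*β₀-s) by rw [inv_div], harith2] at hlog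
      linarith
    have hstep2 : (∫ s in Set.Iic (t-1), ψ s) ≤ ∫ s in Set.Iio t, ψ s :=
      setIntegral_mono_set hψint hψnn (HasSubset.Subset.eventuallyLE hsub)
    calc (∫ s in Set.Iic (t-1), G s) ≤ ∫ s in Set.Iic (t-1), ψ s := hstep1
      _ ≤ ∫ s in Set.Iio t, ψ s := hstep2
      _ = M^(-r) * ((1/r)^a * Real.Gamma a) := hψval
  have hGtotal : (∫ s in Set.Iic t, G s)
      ≤ M^(-r) * ((1/r)^a * Real.Gamma a) + M^(-β₀) := by
    rw [hsplit]; linarith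
  -- prefactor bound
  have hgr := gamma_ratio d β (by linarith)
  have hGβd : 0 < Real.Gamma (β - (d:ℝ)/2) := by
    refine Real.Gamma_pos_of_pos ?_
    have : (d:ℝ)/2 + 1/2 < β := by rw [ha_def] at hβ₀; linarith
    linarith
  have hΓβ : 0 < Real.Gamma β := Real.Gamma_pos_of_pos hβpos
  have hPpos : 0 < cPrime d β * Real.pi ^ (((d:ℝ)-1)/2) / ((2*β)^((d:ℝ)/2) * Real.Gamma a) := by
    rw [cPrime]
    apply div_pos
    apply mul_pos
    apply div_pos hΓβ
    exact mul_pos (Real.rpow_pos_of_pos hπ _) hGβd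
    exact Real.rpow_pos_of_pos hπ _
    exact mul_pos (Real.rpow_pos_of_pos (by linarith) _) hΓapos
  have hP : cPrime d β * Real.pi ^ (((d:ℝ)-1)/2) / ((2*β)^((d:ℝ)/2) * Real.Gamma a)
      ≤ 2^(-((d:ℝ)/2)) / (Real.sqrt Real.pi * Real.Gamma a) := by
    rw [cPrime, div_mul_eq_mul_div, div_div,
      div_le_div_iff₀ (by positivity)
        (mul_pos hsπ0 hΓapos)]
    have hpirw : Real.pi^((d:ℝ)/2) = Real.pi^(((d:ℝ)-1)/2) * Real.sqrt Real.pi := by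
      rw [Real.sqrt_eq_rpow, ← Real.rpow_add hπ]
      congr 1; ring
    have h2βrw : (2*β)^((d:ℝ)/2) = 2^((d:ℝ)/2) * β^((d:ℝ)/2) :=
      Real.mul_rpow (by norm_num) hβpos.le
    have h2cancel : (2:ℝ)^(-((d:ℝ)/2)) * (2:ℝ)^((d:ℝ)/2) = 1 := by
      rw [← Real.rpow_add (by norm_num)]
      norm_num
    calc Real.Gamma β * Real.pi^(((d:ℝ)-1)/2) * (Real.sqrt Real.pi * Real.Gamma a)
        ≤ (β^((d:ℝ)/2) * Real.Gamma (β - (d:ℝ)/2)) * Real.pi^(((d:ℝ)-1)/2)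
            * (Real.sqrt Real.pi * Real.Gamma a) := by
          apply mul_le_mul_of_nonneg_right (mul_le_mul_of_nonneg_right hgr (by positivity))
            (by positivity)
      _ = 2^(-((d:ℝ)/2)) * (Real.pi^((d:ℝ)/2) * Real.Gamma (β - (d:ℝ)/2)
            * ((2*β)^((d:ℝ)/2) * Real.Gamma a)) := by
          rw [hpirw, h2βrw]
          linear_combination -(Real.pi^(((d:ℝ)-1)/2) * Real.sqrt Real.pi
            * Real.Gamma (β - (d:ℝ)/2) * β^((d:ℝ)/2) * Real.Gamma a) * h2cancel
  -- numeric facts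
  have hs2 : Real.sqrt 2 < 1.41422 := by
    rw [Real.sqrt_lt' (by norm_num)]; norm_num
  have hs2' : (1:ℝ) < Real.sqrt 2 := by
    rw [show (1:ℝ) = Real.sqrt 1 by rw [Real.sqrt_one]]
    exact Real.sqrt_lt_sqrt (by norm_num) (by norm_num)
  have hs2sq : Real.sqrt 2 * Real.sqrt 2 = 2 := Real.mul_self_sqrt (by norm_num)
  have hsπ : (1.7724:ℝ) < Real.sqrt Real.pi := by
    rw [show (1.7724:ℝ) = Real.sqrt (1.7724^2) by
      rw [Real.sqrt_sq (by norm_num)]]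
    exact Real.sqrt_lt_sqrt (by positivity) (by nlinarith [Real.pi_gt_d6])
  have h2a : (2:ℝ)^((3:ℝ)/2) ≤ (2:ℝ)^a :=
    Real.rpow_le_rpow_of_exponent_le one_le_two ha32
  have h232 : (2:ℝ)^((3:ℝ)/2) = 2*Real.sqrt 2 := by
    rw [show (3:ℝ)/2 = 1 + 1/2 by norm_num, Real.rpow_add two_pos, Real.rpow_one,
      ← Real.sqrt_eq_rpow]
  have hq : (0:ℝ) < (2:ℝ)^a := Real.rpow_pos_of_pos two_pos a
  have hnum : 1 ≤ (2:ℝ)^a * (Real.sqrt 2 - 1) * Real.Gamma a := by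
    have l2 : (1:ℝ) ≤ (2 - Real.sqrt 2) * Real.sqrt Real.pi := by
      have := mul_le_mul (show (0.58578:ℝ) ≤ 2 - Real.sqrt 2 by linarith)
        (show (1.7724:ℝ) ≤ Real.sqrt Real.pi by linarith) (by norm_num) (by linarith)
      nlinarith
    have l3 : 2*Real.sqrt 2 * (Real.sqrt 2 - 1) * (Real.sqrt Real.pi / 2)
        ≤ (2:ℝ)^a * (Real.sqrt 2 - 1) * Real.Gamma a := by
      apply mul_le_mul (mul_le_mul_of_nonneg_right (h232 ▸ h2a) (by linarith)) hΓa
        (by positivity) (mul_nonneg hq.le (by linarith))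
    nlinarith
  -- core strict inequality
  have hMa : M^(-a) < (2*r)^(-a) := Real.rpow_lt_rpow_of_neg h2r h2rM (by linarith)
  have h3 : (2*r)^a = 2^a * r^a := Real.mul_rpow (by norm_num) hr.le
  have hMa' : M^(-a) < ((2:ℝ)^a * r^a)⁻¹ := by
    rwa [Real.rpow_neg h2r.le, h3] at hMa
  have h4 : (2:ℝ)^(-((d:ℝ)/2)) = Real.sqrt 2 / 2^a := by
    rw [eq_div_iff hq.ne', ← Real.rpow_add two_pos,
      show -((d:ℝ)/2) + a = 1/2 by rw [ha_def]; ring, ← Real.sqrt_eq_rpow]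
  have hcore : 2^(-((d:ℝ)/2)) / (Real.sqrt Real.pi * Real.Gamma a)
      * (M^(-r) * ((1/r)^a * Real.Gamma a) + M^(-β₀))
      < 2 / (Real.sqrt Real.pi * (2*r)^a) * M^(-r) := by
    rw [show M^(-β₀) = M^(-r) * M^(-a) by
        rw [← Real.rpow_add hM0]; congr 1; rw [hβ₀ra]; ring,
      show ((1:ℝ)/r)^a = (r^a)⁻¹ by rw [one_div, Real.inv_rpow hr.le],
      h3, h4]
    exact core_arith hq hsπ0 hΓapos (Real.rpow_pos_of_pos hr a)
      (Real.rpow_pos_of_pos hM0 _) hs2sq (by linarith) hMa' hnum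
  -- assembly
  have hInn : 0 ≤ ∫ s in Set.Iic t, (Real.sqrt (t - s) + A) ^ (d - 1) * (1 - s / (2 * β)) ^ (-β) :=
    integral_nonneg_of_ae hfae
  have hK : (0:ℝ) < (A+1)^(d-1) * (2*β₀)^β₀ := by positivity
  have hQnn : (0:ℝ) ≤ M^(-r) * ((1/r)^a * Real.Gamma a) + M^(-β₀) := by positivity
  have hIbound : (∫ s in Set.Iic t, (Real.sqrt (t - s) + A) ^ (d - 1) * (1 - s / (2 * β)) ^ (-β))
      ≤ ((A+1)^(d-1) * (2*β₀)^β₀) * (M^(-r) * ((1/r)^a * Real.Gamma a) + M^(-β₀)) :=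
    hint1.trans (mul_le_mul_of_nonneg_left hGtotal hK.le)
  have hRHSrw : 2 * (2*β₀)^β₀ / (Real.sqrt Real.pi * (2*β₀ - (d:ℝ) - 1)^a)
      * (A+1)^(d-1) * M^(-β₀ + a)
      = ((A+1)^(d-1) * (2*β₀)^β₀) * (2 / (Real.sqrt Real.pi * (2*r)^a) * M^(-r)) := by
    rw [show 2*β₀ - (d:ℝ) - 1 = 2*r by rw [hr_def, ha_def]; ring,
      show -β₀ + a = -r by rw [hr_def]; ring]
    ring
  rw [hRHSrw]
  calc cPrime d β * Real.pi ^ (((d:ℝ)-1)/2) / ((2*β)^((d:ℝ)/2) * Real.Gamma a)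
      * (∫ s in Set.Iic t, (Real.sqrt (t - s) + A) ^ (d - 1) * (1 - s / (2 * β)) ^ (-β))
      ≤ cPrime d β * Real.pi ^ (((d:ℝ)-1)/2) / ((2*β)^((d:ℝ)/2) * Real.Gamma a)
        * (((A+1)^(d-1) * (2*β₀)^β₀) * (M^(-r) * ((1/r)^a * Real.Gamma a) + M^(-β₀))) :=
        mul_le_mul_of_nonneg_left hIbound hPpos.le
    _ ≤ 2^(-((d:ℝ)/2)) / (Real.sqrt Real.pi * Real.Gamma a)
        * (((A+1)^(d-1) * (2*β₀)^β₀) * (M^(-r) * ((1/r)^a * Real.Gamma a) + M^(-β₀))) :=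
        mul_le_mul_of_nonneg_right hP (by positivity)
    _ = ((A+1)^(d-1) * (2*β₀)^β₀) * (2^(-((d:ℝ)/2)) / (Real.sqrt Real.pi * Real.Gamma a)
        * (M^(-r) * ((1/r)^a * Real.Gamma a) + M^(-β₀))) := by ring
    _ < ((A+1)^(d-1) * (2*β₀)^β₀) * (2 / (Real.sqrt Real.pi * (2*r)^a) * M^(-r)) :=
        mul_lt_mul_of_pos_left hcore hK
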